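/- arXiv:1508.00018 — 2 statements merged into one kernel-verified Lean document; each statement's English description precedes it below -/
import Mathlib

section
/- Discrete Hardy inequality: For every a > 0 and γ > 0 there exists a constant C > 0 such that for any sequence (b_n) of nonnegative reals, ∑_{n=0}^∞ 2^{-na} (∑_{k=0}^n b_k)^γ ≤ C ∑_{n=0}^∞ 2^{-na} b_n^γ. -/
open ENNReal

/-- Fubini/geometric rearrangement: summing `r^(n-k) * c k` over the triangle
`k ≤ n` factors as a product of a geometric series and `∑' c`. -/
lemma hardy_cauchy_aux (r : ℝ≥0∞) (c : ℕ → ℝ≥0∞) :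
    ∑' n : ℕ, ∑ k ∈ Finset.range (n + 1), r ^ (n - k) * c k
      = (1 - r)⁻¹ * ∑' k : ℕ, c k := by
  have h1 : ∀ n : ℕ, ∑ k ∈ Finset.range (n + 1), r ^ (n - k) * c k
      = ∑' k : ℕ, (if k ≤ n then r ^ (n - k) * c k else 0) := by
    intro n
    rw [tsum_eq_sum (s := Finset.range (n + 1)) (by
      intro k hk
      simp only [Finset.mem_range, not_lt] at hk
      simp [Nat.not_le.mpr (Nat.lt_of_lt_of_le (Nat.lt_succ_self n) hk)])]
    refine Finset.sum_congr rfl fun k hk => ?_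
    simp [Nat.lt_succ_iff.mp (Finset.mem_range.mp hk)]
  simp_rw [h1]
  rw [ENNReal.tsum_comm]
  have h2 : ∀ k : ℕ, (∑' n : ℕ, (if k ≤ n then r ^ (n - k) * c k else 0))
      = (1 - r)⁻¹ * c k := by
    intro k
    have hinj : Function.Injective (fun m : ℕ => k + m) := add_right_injective k
    have hsupp : Function.support (fun n : ℕ => if k ≤ n then r ^ (n - k) * c k else 0)
        ⊆ Set.range (fun m : ℕ => k + m) := by
      intro n hn
      by_cases hkn : k ≤ n
      · exact ⟨n - k, by simp only []; omega⟩
      · simp [hkn] at hn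
    rw [← Function.Injective.tsum_eq hinj hsupp]
    simp only [le_add_iff_nonneg_right, zero_le, if_true, Nat.add_sub_cancel_left]
    rw [ENNReal.tsum_mul_right, ENNReal.tsum_geometric]
  simp_rw [h2]
  rw [ENNReal.tsum_mul_left]

/-- Subadditivity of `x ↦ x ^ γ` for `0 ≤ γ ≤ 1` over finite sums. -/
lemma hardy_rpow_sum_le (γ : ℝ) (hγ0 : 0 < γ) (hγ1 : γ ≤ 1) (n : ℕ) (x : ℕ → ℝ≥0∞) :
    (∑ k ∈ Finset.range n, x k) ^ γ ≤ ∑ k ∈ Finset.range n, x k ^ γ := by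
  induction n with
  | zero => simp [ENNReal.zero_rpow_of_pos hγ0]
  | succ n ih =>
      rw [Finset.sum_range_succ, Finset.sum_range_succ]
      calc (∑ k ∈ Finset.range n, x k + x n) ^ γ
          ≤ (∑ k ∈ Finset.range n, x k) ^ γ + x n ^ γ :=
            ENNReal.rpow_add_le_add_rpow _ _ hγ0.le hγ1
        _ ≤ ∑ k ∈ Finset.range n, x k ^ γ + x n ^ γ := by gcongr

/-- Pointwise weighted power inequality via Hölder. -/
lemma hardy_pointwise (γ : ℝ) (hγ : 0 < γ) (u : ℝ≥0∞) (hu1 : 1 < u) (hu : u ≠ ∞) :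
    ∃ C1 : ℝ≥0∞, 0 < C1 ∧ C1 ≠ ∞ ∧ ∀ (n : ℕ) (x : ℕ → ℝ≥0∞),
      (∑ k ∈ Finset.range (n + 1), x k) ^ γ
        ≤ C1 * ∑ k ∈ Finset.range (n + 1), (u ^ γ) ^ (n - k) * x k ^ γ := by
  rcases le_or_gt γ 1 with hγ1 | hγ1
  · refine ⟨1, zero_lt_one, one_ne_top, fun n x => ?_⟩
    rw [one_mul]
    refine (hardy_rpow_sum_le γ hγ hγ1 (n + 1) x).trans ?_
    refine Finset.sum_le_sum fun k _ => ?_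
    conv_lhs => rw [← one_mul (x k ^ γ)]
    gcongr
    exact one_le_pow_of_one_le' (ENNReal.one_le_rpow hu1.le hγ) _
  · -- Hölder with conjugate exponents γ and q' = γ/(γ-1)
    set q' : ℝ := γ / (γ - 1) with hq'
    have hpq : γ.HolderConjugate q' := Real.HolderConjugate.conjExponent hγ1
    set v : ℝ≥0∞ := u ^ q' with hv
    have hv1 : 1 < v := by
      rw [hv]
      exact ENNReal.one_lt_rpow hu1 hpq.symm.pos
    have hvinv : v⁻¹ < 1 := ENNReal.inv_lt_one.mpr hv1
    set D : ℝ≥0∞ := (1 - v⁻¹)⁻¹ with hD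
    have hD0 : D ≠ 0 := by
      rw [hD]
      simp only [ne_eq, ENNReal.inv_eq_zero]
      exact ne_top_of_le_ne_top one_ne_top tsub_le_self
    have hDtop : D ≠ ∞ := by
      rw [hD, ENNReal.inv_ne_top]
      exact (tsub_pos_of_lt hvinv).ne'
    refine ⟨D ^ (γ - 1), ?_, ?_, fun n x => ?_⟩
    · exact ENNReal.rpow_pos (pos_iff_ne_zero.mpr hD0) hDtop
    · exact ENNReal.rpow_ne_top_of_nonneg (by linarith) hDtop
    · have key : (∑ k ∈ Finset.range (n + 1), x k)
          ≤ (∑ k ∈ Finset.range (n + 1), (x k * u ^ (n - k)) ^ γ) ^ (1 / γ)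
            * (∑ k ∈ Finset.range (n + 1), ((u⁻¹) ^ (n - k)) ^ q') ^ (1 / q') := by
        have := ENNReal.inner_le_Lp_mul_Lq (Finset.range (n + 1))
          (fun k => x k * u ^ (n - k)) (fun k => (u⁻¹) ^ (n - k)) hpq
        refine le_trans (le_of_eq ?_) this
        refine Finset.sum_congr rfl fun k _ => ?_
        rw [mul_assoc, ← mul_pow, ENNReal.mul_inv_cancel (by positivity) hu, one_pow, mul_one]
      have hA : ∀ k : ℕ, (x k * u ^ (n - k)) ^ γ = (u ^ γ) ^ (n - k) * x k ^ γ := by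
        intro k
        rw [ENNReal.mul_rpow_of_nonneg _ _ hγ.le, mul_comm]
        congr 1
        rw [← ENNReal.rpow_natCast u (n - k), ← ENNReal.rpow_mul, mul_comm,
          ENNReal.rpow_mul, ENNReal.rpow_natCast]
      have hB : (∑ k ∈ Finset.range (n + 1), ((u⁻¹) ^ (n - k)) ^ q') ≤ D := by
        have hterm : ∀ k : ℕ, ((u⁻¹ : ℝ≥0∞) ^ (n - k)) ^ q' = (v⁻¹) ^ (n - k) := by
          intro k
          rw [← ENNReal.rpow_natCast (u⁻¹) (n - k), ← ENNReal.rpow_mul, mul_comm,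
            ENNReal.rpow_mul, ENNReal.rpow_natCast, ENNReal.inv_rpow, ← hv]
        simp_rw [hterm]
        calc ∑ k ∈ Finset.range (n + 1), (v⁻¹) ^ (n - k)
            = ∑ j ∈ Finset.range (n + 1), (v⁻¹) ^ j := by
              rw [← Finset.sum_range_reflect (fun j => (v⁻¹ : ℝ≥0∞) ^ j) (n + 1)]
              refine Finset.sum_congr rfl fun k hk => ?_
              have hk' : k ≤ n := Nat.lt_succ_iff.mp (Finset.mem_range.mp hk)
              congr 1
          _ ≤ ∑' j : ℕ, (v⁻¹) ^ j := ENNReal.sum_le_tsum _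
          _ = D := by rw [ENNReal.tsum_geometric]
      calc (∑ k ∈ Finset.range (n + 1), x k) ^ γ
          ≤ ((∑ k ∈ Finset.range (n + 1), (x k * u ^ (n - k)) ^ γ) ^ (1 / γ)
            * (∑ k ∈ Finset.range (n + 1), ((u⁻¹) ^ (n - k)) ^ q') ^ (1 / q')) ^ γ :=
            ENNReal.rpow_le_rpow key hγ.le
        _ = (∑ k ∈ Finset.range (n + 1), (x k * u ^ (n - k)) ^ γ)
            * ((∑ k ∈ Finset.range (n + 1), ((u⁻¹) ^ (n - k)) ^ q') ^ (1 / q')) ^ γ := by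
            rw [ENNReal.mul_rpow_of_nonneg _ _ hγ.le, ← ENNReal.rpow_mul,
              one_div_mul_cancel (ne_of_gt hγ), ENNReal.rpow_one]
        _ ≤ (∑ k ∈ Finset.range (n + 1), (x k * u ^ (n - k)) ^ γ) * D ^ (γ - 1) := by
            gcongr
            rw [← ENNReal.rpow_mul]
            have h1q : 1 / q' * γ = γ - 1 := by
              rw [hq']
              field_simp
            rw [h1q]
            exact ENNReal.rpow_le_rpow hB (by linarith)
        _ = D ^ (γ - 1) * ∑ k ∈ Finset.range (n + 1), (u ^ γ) ^ (n - k) * x k ^ γ := by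
            rw [mul_comm]
            congr 1
            exact Finset.sum_congr rfl fun k _ => hA k

/-- Discrete Hardy inequality in the extended nonnegative reals. -/
theorem discrete_hardy (a γ : ℝ) (ha : 0 < a) (hγ : 0 < γ) :
    ∃ C : ℝ≥0∞, 0 < C ∧ C ≠ ∞ ∧ ∀ b : ℕ → ℝ≥0∞,
      ∑' n : ℕ, ENNReal.ofReal ((2:ℝ) ^ (-(n:ℝ) * a)) *
          (∑ k ∈ Finset.range (n + 1), b k) ^ γ ≤
        C * ∑' n : ℕ, ENNReal.ofReal ((2:ℝ) ^ (-(n:ℝ) * a)) * (b n) ^ γ := by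
  -- constants
  set u : ℝ≥0∞ := ENNReal.ofReal ((2:ℝ) ^ (a / (2 * γ))) with hudef
  have h2 : (0:ℝ) < 2 := by norm_num
  have hu1 : 1 < u := by
    rw [hudef, ← ENNReal.ofReal_one]
    exact ENNReal.ofReal_lt_ofReal_iff (by positivity) |>.mpr
      (Real.one_lt_rpow_iff_of_pos h2 |>.mpr (Or.inl ⟨by norm_num, by positivity⟩))
  have hutop : u ≠ ∞ := ENNReal.ofReal_ne_top
  obtain ⟨C1, hC10, hC1top, hC1⟩ := hardy_pointwise γ hγ u hu1 hutop
  set q : ℝ≥0∞ := ENNReal.ofReal ((2:ℝ) ^ (-a)) with hqdef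
  set r : ℝ≥0∞ := ENNReal.ofReal ((2:ℝ) ^ (-(a / 2))) with hrdef
  set t : ℝ≥0∞ := u ^ γ with htdef
  have ht : t = ENNReal.ofReal ((2:ℝ) ^ (a / 2)) := by
    rw [htdef, hudef, ENNReal.ofReal_rpow_of_pos (by positivity),
      ← Real.rpow_mul h2.le]
    have hγ' : γ ≠ 0 := ne_of_gt hγ
    have hexp : a / (2 * γ) * γ = a / 2 := by
      field_simp
    rw [hexp]
  have hr1 : r < 1 := by
    rw [hrdef, ← ENNReal.ofReal_one]
    refine ENNReal.ofReal_lt_ofReal_iff (by norm_num) |>.mpr ?_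
    exact Real.rpow_lt_one_of_one_lt_of_neg (by norm_num) (by linarith)
  have hqt : q * t = r := by
    rw [hqdef, ht, hrdef, ← ENNReal.ofReal_mul (by positivity),
      ← Real.rpow_add h2]
    congr 1
    ring
  -- the weight is a geometric sequence
  have hw : ∀ n : ℕ, ENNReal.ofReal ((2:ℝ) ^ (-(n:ℝ) * a)) = q ^ n := by
    intro n
    rw [hqdef, ← ENNReal.ofReal_pow (by positivity), ← Real.rpow_natCast ((2:ℝ) ^ (-a)) n,
      ← Real.rpow_mul h2.le]
    congr 1
    ring
  -- weight identity on the triangle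
  have hwt : ∀ n k : ℕ, k ≤ n → q ^ n * t ^ (n - k) = r ^ (n - k) * q ^ k := by
    intro n k hk
    have hn : n = k + (n - k) := by omega
    rw [hn, pow_add, Nat.add_sub_cancel_left, ← hqt, mul_pow]
    ring
  refine ⟨C1 * (1 - r)⁻¹, ?_, ?_, fun b => ?_⟩
  · refine ENNReal.mul_pos (ne_of_gt hC10) ?_
    simp only [ne_eq, ENNReal.inv_eq_zero]
    exact ne_top_of_le_ne_top one_ne_top tsub_le_self
  · refine ENNReal.mul_ne_top hC1top ?_
    rw [ne_eq, ENNReal.inv_eq_top]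
    exact (tsub_pos_of_lt hr1).ne'
  · calc ∑' n : ℕ, ENNReal.ofReal ((2:ℝ) ^ (-(n:ℝ) * a)) *
          (∑ k ∈ Finset.range (n + 1), b k) ^ γ
        ≤ ∑' n : ℕ, q ^ n * (C1 * ∑ k ∈ Finset.range (n + 1), t ^ (n - k) * b k ^ γ) := by
          refine ENNReal.tsum_le_tsum fun n => ?_
          rw [hw n]
          exact mul_le_mul_right (hC1 n b) _
      _ = C1 * ∑' n : ℕ, ∑ k ∈ Finset.range (n + 1), r ^ (n - k) * (q ^ k * b k ^ γ) := by
          rw [← ENNReal.tsum_mul_left]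
          refine tsum_congr fun n => ?_
          rw [← mul_assoc, mul_comm (q ^ n) C1, mul_assoc, Finset.mul_sum]
          congr 1
          refine Finset.sum_congr rfl fun k hk => ?_
          have hk' : k ≤ n := Nat.lt_succ_iff.mp (Finset.mem_range.mp hk)
          rw [← mul_assoc, hwt n k hk', mul_assoc]
      _ = C1 * ((1 - r)⁻¹ * ∑' k : ℕ, q ^ k * b k ^ γ) := by
          rw [hardy_cauchy_aux]
      _ = C1 * (1 - r)⁻¹ * ∑' n : ℕ, ENNReal.ofReal ((2:ℝ) ^ (-(n:ℝ) * a)) * (b n) ^ γ := by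
          have hs : ∑' k : ℕ, q ^ k * b k ^ γ
              = ∑' n : ℕ, ENNReal.ofReal ((2:ℝ) ^ (-(n:ℝ) * a)) * (b n) ^ γ :=
            tsum_congr fun n => by rw [hw n]
          rw [hs, mul_assoc]
end

section
/- Bounded overlap of comparable disjoint balls: Let (X,d) be a metric space with the weak homogeneity property. Fix 1 ≤ a < b and κ > 1. Then there exists a constant C such that for any family {B_i = B(x_i, r_i)} of pairwise disjoint balls and any r > 0, the sum over those i with a·r ≤ r_i ≤ b·r of the indicator functions of κB_i is bounded pointwise by C. -/
open Metric Set ENNReal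

/-- A metric space has the weak homogeneity property if there is `n` such that any
`r/2`-separated set has at most `n` points in any ball of radius `r`. -/
def WeakHomogeneity (X : Type*) [MetricSpace X] : Prop :=
  ∃ n : ℕ, ∀ r : ℝ, 0 < r → ∀ E : Set X,
    (E.Pairwise fun x y => r / 2 ≤ dist x y) →
    ∀ x₀ : X, ∀ S : Finset X, ↑S ⊆ E ∩ ball x₀ r → S.card ≤ n

/-- Greedy net: any finite set contains a `D`-separated subset that is `D`-dense in it. -/
lemma exists_net {X : Type*} [MetricSpace X] (D : ℝ) (hD : 0 < D) (S : Finset X) :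
    ∃ T ⊆ S, (↑T : Set X).Pairwise (fun x y => D ≤ dist x y) ∧
      ∀ x ∈ S, ∃ t ∈ T, dist x t < D := by
  classical
  induction S using Finset.strongInduction with
  | _ S ih =>
    rcases S.eq_empty_or_nonempty with rfl | ⟨x, hx⟩
    · exact ⟨∅, Finset.Subset.refl _, by simp, by simp⟩
    · set S' := S.filter (fun y => D ≤ dist x y) with hS'
      have hssub : S' ⊂ S := by
        refine Finset.ssubset_iff_of_subset (Finset.filter_subset _ _) |>.2 ⟨x, hx, ?_⟩
        simp [hS', hx, dist_self, not_le, hD]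
      obtain ⟨T', hT'S', hpair, hcov⟩ := ih S' hssub
      refine ⟨insert x T', ?_, ?_, ?_⟩
      · intro y hy
        rcases Finset.mem_insert.1 hy with rfl | hy
        · exact hx
        · exact (Finset.filter_subset _ _) (hT'S' hy)
      · intro p hp q hq hpq
        simp only [Finset.coe_insert, Set.mem_insert_iff, Finset.mem_coe] at hp hq
        rcases hp with rfl | hp
        · rcases hq with rfl | hq
          · exact absurd rfl hpq
          · have := hT'S' hq
            simp only [hS', Finset.mem_filter] at this
            exact this.2
        · rcases hq with rfl | hq
          · have := hT'S' hp
            simp only [hS', Finset.mem_filter] at this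
            rw [dist_comm]
            exact this.2
          · exact hpair hp hq hpq
      · intro y hy
        by_cases hyx : dist y x < D
        · exact ⟨x, Finset.mem_insert_self _ _, hyx⟩
        · have : y ∈ S' := by
            simp only [hS', Finset.mem_filter]
            exact ⟨hy, by rw [dist_comm]; exact not_lt.1 hyx⟩
          obtain ⟨t, ht, hdt⟩ := hcov y this
          exact ⟨t, Finset.mem_insert_of_mem ht, hdt⟩

/-- Iterated weak homogeneity: an `s`-separated set has at most `n^(k+1)` points
in any ball of radius `2^k * s`. -/
lemma count_iter {X : Type*} [MetricSpace X] (n : ℕ)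
    (hn : ∀ r : ℝ, 0 < r → ∀ E : Set X,
      (E.Pairwise fun x y => r / 2 ≤ dist x y) →
      ∀ x₀ : X, ∀ S : Finset X, ↑S ⊆ E ∩ ball x₀ r → S.card ≤ n) :
    ∀ k : ℕ, ∀ s : ℝ, 0 < s → ∀ E : Set X,
      (E.Pairwise fun x y => s ≤ dist x y) →
      ∀ x₀ : X, ∀ S : Finset X, ↑S ⊆ E ∩ ball x₀ (2 ^ k * s) → S.card ≤ n ^ (k + 1) := by
  classical
  intro k
  induction k with
  | zero =>
    intro s hs E hE x₀ S hS
    have hE' : E.Pairwise fun x y => s / 2 ≤ dist x y :=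
      hE.mono' (fun x y h => le_trans (by linarith) h)
    simpa using hn s hs E hE' x₀ S (by simpa using hS)
  | succ k ih =>
    intro s hs E hE x₀ S hS
    have hD : (0:ℝ) < 2 ^ k * s := by positivity
    obtain ⟨T, hTS, hTpair, hTcov⟩ := exists_net (2 ^ k * s) hD S
    -- T is (2^k s)-separated inside a ball of radius 2^(k+1) s, hence |T| ≤ n
    have hTcard : T.card ≤ n := by
      have hr : (0:ℝ) < 2 ^ (k+1) * s := by positivity
      have hpair2 : (↑T : Set X).Pairwise fun x y => (2 ^ (k+1) * s) / 2 ≤ dist x y := by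
        have : (2 ^ (k+1) * s) / 2 = 2 ^ k * s := by ring
        rw [this]; exact hTpair
      refine hn (2 ^ (k+1) * s) hr (↑T) hpair2 x₀ T ?_
      intro y hy
      exact ⟨hy, (hS (hTS (by exact_mod_cast hy))).2⟩
    have hSsub : S ⊆ T.biUnion (fun t => S.filter (fun y => dist y t < 2 ^ k * s)) := by
      intro y hy
      obtain ⟨t, ht, hdt⟩ := hTcov y hy
      exact Finset.mem_biUnion.2 ⟨t, ht, Finset.mem_filter.2 ⟨hy, hdt⟩⟩
    calc S.card ≤ (T.biUnion (fun t => S.filter (fun y => dist y t < 2 ^ k * s))).card :=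
          Finset.card_le_card hSsub
      _ ≤ ∑ t ∈ T, (S.filter (fun y => dist y t < 2 ^ k * s)).card := Finset.card_biUnion_le
      _ ≤ ∑ _t ∈ T, n ^ (k + 1) := by
          refine Finset.sum_le_sum fun t _ => ?_
          refine ih s hs E hE t _ ?_
          intro y hy
          simp only [Finset.coe_filter, Set.mem_setOf_eq] at hy
          exact ⟨(hS hy.1).1, mem_ball.2 hy.2⟩
      _ = T.card * n ^ (k + 1) := by rw [Finset.sum_const, smul_eq_mul]
      _ ≤ n * n ^ (k + 1) := Nat.mul_le_mul_right _ hTcard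
      _ = n ^ (k + 2) := by ring

/-- Bounded overlap of dilations of pairwise disjoint balls with comparable radii. -/
theorem bounded_overlap {X : Type*} [MetricSpace X] (hX : WeakHomogeneity X)
    (a b κ : ℝ) (ha : 1 ≤ a) (hab : a < b) (hκ : 1 < κ) :
    ∃ C : ℝ≥0∞, C ≠ ∞ ∧ ∀ (ι : Type) (c : ι → X) (rad : ι → ℝ),
      (∀ i, 0 < rad i) →
      (Pairwise fun i j => Disjoint (ball (c i) (rad i)) (ball (c j) (rad j))) →
      ∀ r : ℝ, 0 < r → ∀ z : X,
        (∑' i : ι, if a * r ≤ rad i ∧ rad i ≤ b * r then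
            (ball (c i) (κ * rad i)).indicator (fun _ => (1 : ℝ≥0∞)) z else 0) ≤ C := by
  classical
  obtain ⟨n, hn⟩ := hX
  have ha0 : (0:ℝ) < a := lt_of_lt_of_le one_pos ha
  have hb0 : (0:ℝ) < b := lt_trans ha0 hab
  have hκ0 : (0:ℝ) < κ := lt_trans one_pos hκ
  obtain ⟨K, hK⟩ : ∃ K : ℕ, κ * b / a < 2 ^ K := pow_unbounded_of_one_lt _ one_lt_two
  refine ⟨(n ^ (K + 1) : ℕ), ENNReal.natCast_ne_top _, ?_⟩
  intro ι c rad hrad hdisj r hr z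
  -- the "good" indices
  set good : ι → Prop := fun i =>
    (a * r ≤ rad i ∧ rad i ≤ b * r) ∧ z ∈ ball (c i) (κ * rad i) with hgood
  have hsep : ∀ i j, good i → good j → i ≠ j → a * r ≤ dist (c i) (c j) := by
    intro i j hi hj hij
    by_contra h
    push_neg at h
    have hij' := hdisj hij
    have h1 : c j ∈ ball (c i) (rad i) := by
      refine mem_ball.2 ?_
      rw [dist_comm]
      exact lt_of_lt_of_le h hi.1.1
    have h2 : c j ∈ ball (c j) (rad j) := mem_ball_self (hrad j)
    exact (hij'.ne_of_mem h1 h2) rfl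
  have har : (0:ℝ) < a * r := by positivity
  -- centers of good indices lie in a ball of radius 2^K * (a*r) around z
  have hball : ∀ i, good i → c i ∈ ball z (2 ^ K * (a * r)) := by
    intro i hi
    have h1 : dist (c i) z < κ * rad i := by rw [dist_comm]; exact mem_ball.1 hi.2
    have h2 : κ * rad i ≤ κ * (b * r) := by
      have := hi.1.2
      nlinarith
    have h3 : κ * (b * r) ≤ 2 ^ K * (a * r) := by
      have h4 : κ * b / a < 2 ^ K := hK
      have : κ * b ≤ 2 ^ K * a := by
        rw [div_lt_iff₀ ha0] at h4
        nlinarith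
      nlinarith
    exact mem_ball.2 (lt_of_lt_of_le h1 (le_trans h2 h3))
  set E : Set X := c '' {i | good i} with hE
  have hEpair : E.Pairwise fun x y => a * r ≤ dist x y := by
    rintro x ⟨i, hi, rfl⟩ y ⟨j, hj, rfl⟩ hxy
    have hij : i ≠ j := fun h => hxy (by rw [h])
    exact hsep i j hi hj hij
  have hinj : ∀ i j, good i → good j → c i = c j → i = j := by
    intro i j hi hj hc
    by_contra hij
    have := hsep i j hi hj hij
    rw [hc, dist_self] at this
    linarith
  -- bound every finite partial sum
  rw [ENNReal.tsum_eq_iSup_sum]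
  refine iSup_le fun F => ?_
  have key : ∀ i ∈ F, (if a * r ≤ rad i ∧ rad i ≤ b * r then
      (ball (c i) (κ * rad i)).indicator (fun _ => (1 : ℝ≥0∞)) z else 0)
      = if good i then 1 else 0 := by
    intro i _
    by_cases h1 : a * r ≤ rad i ∧ rad i ≤ b * r
    · by_cases h2 : z ∈ ball (c i) (κ * rad i)
      · simp [h1, hgood, Set.indicator_of_mem h2, mem_ball.1 h2]
      · rw [mem_ball, not_lt] at h2
        simp only [h1, hgood, Set.indicator, mem_ball, if_true, and_true, true_and]
    · simp [h1, hgood]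
  rw [Finset.sum_congr rfl key]
  have : (∑ i ∈ F, if good i then (1:ℝ≥0∞) else 0)
      = ((F.filter good).card : ℝ≥0∞) := by
    rw [Finset.sum_ite, Finset.sum_const, Finset.sum_const]
    simp
  rw [this]
  have hcard : (F.filter good).card ≤ n ^ (K + 1) := by
    have himg : ((F.filter good).image c).card = (F.filter good).card := by
      refine Finset.card_image_of_injOn ?_
      intro i hi j hj hc
      simp only [Finset.coe_filter, Set.mem_setOf_eq] at hi hj
      exact hinj i j hi.2 hj.2 hc
    rw [← himg]
    refine count_iter n hn K (a * r) har E hEpair z _ ?_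
    intro x hx
    simp only [Finset.coe_image, Set.mem_image, Finset.mem_coe, Finset.mem_filter] at hx
    obtain ⟨i, ⟨_, hi⟩, rfl⟩ := hx
    exact ⟨⟨i, hi, rfl⟩, hball i hi⟩
  exact_mod_cast Nat.cast_le.2 hcard
end
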